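/- Let M ≠ 0, Λ ∈ ℝ, ℓ ≥ 2 an integer, I ⊆ (0, ∞) an open interval on which f > 0 and μr + 6M > 0, and let ρ : I → ℝ be differentiable with ρ'(r) = 1/f(r). Then for each sign ε ∈ {+1, −1}, the function φ(t, r) = r·e^{w(ρ(r) + ε t)}/(μr + 6M) satisfies the Zerilli equation ∂_t²φ − f∂_r(f∂_rφ) + f·V^Z·φ = 0 on ℝ × I. -/

import Mathlib

/-- The wave operator `∂_t²φ - f ∂_r(f ∂_r φ) + f V φ` acting on a function
`φ(t, r)`, in Schwarzschild-type coordinates (`∂_{r*} = f ∂_r`). -/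
noncomputable def waveOp (f V : ℝ → ℝ) (φ : ℝ → ℝ → ℝ) (t r : ℝ) : ℝ :=
  deriv (deriv (fun t' => φ t' r)) t
    - f r * deriv (fun r' => f r' * deriv (fun r'' => φ t r'') r') r
    + f r * V r * φ t r

set_option maxHeartbeats 4000000 in
lemma zerilli_key (M Λ L r ex ε : ℝ) (hM : M ≠ 0) (hr : r ≠ 0)
    (hf : 1 - 2 * M / r - Λ * r ^ 2 / 3 ≠ 0) (hd : (L - 1) * (L + 2) * r + 6 * M ≠ 0)
    (hε : ε * ε = 1) :
    r * (ex * ((L - 1) * L * (L + 1) * (L + 2) / (12 * M) * ε) *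
          ((L - 1) * L * (L + 1) * (L + 2) / (12 * M) * ε)) / ((L - 1) * (L + 2) * r + 6 * M) -
      (1 - 2 * M / r - Λ * r ^ 2 / 3) *
        ((((6 * M * (2 * M / r ^ 2 - 2 * Λ * r / 3) +
                  (L - 1) * L * (L + 1) * (L + 2) / (12 * M) *
                    (1 * ((L - 1) * (L + 2) * r + 6 * M) + r * ((L - 1) * (L + 2)))) * ex +
              (6 * M * (1 - 2 * M / r - Λ * r ^ 2 / 3) +
                  (L - 1) * L * (L + 1) * (L + 2) / (12 * M) * (r * ((L - 1) * (L + 2) * r + 6 * M))) *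
                (ex * ((L - 1) * L * (L + 1) * (L + 2) / (12 * M) * (1 / (1 - 2 * M / r - Λ * r ^ 2 / 3))))) *
            ((L - 1) * (L + 2) * r + 6 * M) ^ 2 -
          (6 * M * (1 - 2 * M / r - Λ * r ^ 2 / 3) +
                (L - 1) * L * (L + 1) * (L + 2) / (12 * M) * (r * ((L - 1) * (L + 2) * r + 6 * M))) * ex *
            (((2:ℕ):ℝ) * ((L - 1) * (L + 2) * r + 6 * M) ^ (2 - 1) * ((L - 1) * (L + 2)))) /
          (((L - 1) * (L + 2) * r + 6 * M) ^ 2) ^ 2) +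
      (1 - 2 * M / r - Λ * r ^ 2 / 3) *
          (((((L - 1) * (L + 2)) ^ 2 * L * (L + 1) - 24 * M ^ 2 * Λ) * r ^ 3 +
              6 * ((L - 1) * (L + 2)) ^ 2 * M * r ^ 2 +
              36 * ((L - 1) * (L + 2)) * M ^ 2 * r + 72 * M ^ 3) /
            (r ^ 3 * ((L - 1) * (L + 2) * r + 6 * M) ^ 2)) *
        (r * ex / ((L - 1) * (L + 2) * r + 6 * M)) = 0 := by
  rw [show ex * ((L - 1) * L * (L + 1) * (L + 2) / (12 * M) * ε) * ((L - 1) * L * (L + 1) * (L + 2) / (12 * M) * ε)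
      = ex * (L - 1) * L * (L + 1) * (L + 2) / (12 * M) * (L - 1) * L * (L + 1) * (L + 2) / (12 * M) from by
    linear_combination (ex * ((L - 1) * L * (L + 1) * (L + 2) / (12 * M)) ^ 2) * hε]
  have h12 : (12 : ℝ) * M ≠ 0 := mul_ne_zero (by norm_num) hM
  have hf2 : (r - 2 * M) * 3 - r * (Λ * r ^ 2) ≠ 0 := by
    intro h
    apply hf
    field_simp
    linarith
  have hf3 : (r - 2 * M) * 3 - r ^ 3 * Λ ≠ 0 := by
    intro h
    apply hf2
    linear_combination h
  field_simp [hf2, hf3]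
  ring

set_option maxHeartbeats 1000000 in
/-- The Chandrasekhar algebraically special solutions: for each sign `ε = ±1`,
`φ(t,r) = r e^{w(ρ(r) + ε t)}/(μr + 6M)` solves the Zerilli equation, `ρ` being
a tortoise coordinate (`ρ' = 1/f`). -/
theorem stmt_13 (M Λ : ℝ) (hM : M ≠ 0) (ℓ : ℕ) (hℓ : 2 ≤ ℓ) (a b : ℝ)
    (hI : Set.Ioo a b ⊆ Set.Ioi (0 : ℝ)) :
    let μ : ℝ := ((ℓ : ℝ) - 1) * ((ℓ : ℝ) + 2)
    let w : ℝ := ((ℓ : ℝ) - 1) * (ℓ : ℝ) * ((ℓ : ℝ) + 1) * ((ℓ : ℝ) + 2) / (12 * M)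
    let f : ℝ → ℝ := fun r => 1 - 2 * M / r - Λ * r ^ 2 / 3
    let VZ : ℝ → ℝ := fun r =>
      ((μ ^ 2 * (ℓ : ℝ) * ((ℓ : ℝ) + 1) - 24 * M ^ 2 * Λ) * r ^ 3
          + 6 * μ ^ 2 * M * r ^ 2 + 36 * μ * M ^ 2 * r + 72 * M ^ 3)
        / (r ^ 3 * (μ * r + 6 * M) ^ 2)
    (∀ r ∈ Set.Ioo a b, 0 < f r) →
    (∀ r ∈ Set.Ioo a b, 0 < μ * r + 6 * M) →
    ∀ ρ : ℝ → ℝ, (∀ r ∈ Set.Ioo a b, HasDerivAt ρ (1 / f r) r) →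
      ∀ ε : ℝ, (ε = 1 ∨ ε = -1) →
        ∀ t : ℝ, ∀ r ∈ Set.Ioo a b,
          waveOp f VZ
            (fun t' r' => r' * Real.exp (w * (ρ r' + ε * t')) / (μ * r' + 6 * M))
            t r = 0 := by
  intro μ w f VZ hfpos hdpos ρ hρ ε hε t r hr
  have hr0 : (0:ℝ) < r := hI hr
  have hfr : 0 < f r := hfpos r hr
  have hdr : 0 < μ * r + 6 * M := hdpos r hr
  have hμdef : μ = ((ℓ : ℝ) - 1) * ((ℓ : ℝ) + 2) := rfl
  have hwdef : w = ((ℓ : ℝ) - 1) * (ℓ : ℝ) * ((ℓ : ℝ) + 1) * ((ℓ : ℝ) + 2) / (12 * M) := rfl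
  have hfdef : ∀ x : ℝ, f x = 1 - 2 * M / x - Λ * x ^ 2 / 3 := fun _ => rfl
  have hVdef : VZ r =
      ((μ ^ 2 * (ℓ : ℝ) * ((ℓ : ℝ) + 1) - 24 * M ^ 2 * Λ) * r ^ 3
          + 6 * μ ^ 2 * M * r ^ 2 + 36 * μ * M ^ 2 * r + 72 * M ^ 3)
        / (r ^ 3 * (μ * r + 6 * M) ^ 2) := rfl
  -- derivative of f
  have hfD : ∀ x : ℝ, x ≠ 0 → HasDerivAt f (2*M/x^2 - 2*Λ*x/3) x := by
    intro x hx
    have h1 : HasDerivAt (fun y : ℝ => 2 * M / y) (2*M * (-(x^2)⁻¹)) x :=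
      (hasDerivAt_inv hx).const_mul (2*M)
    have h2 : HasDerivAt (fun y : ℝ => Λ * y ^ 2 / 3) (Λ * (2*x) / 3) x := by
      simpa using ((hasDerivAt_pow 2 x).const_mul Λ).div_const 3
    have h3 : HasDerivAt f (0 - 2*M*(-(x^2)⁻¹) - Λ*(2*x)/3) x := ((hasDerivAt_const x (1:ℝ)).sub h1).sub h2
    convert h3 using 1
    ring
  -- derivative of exp factor in r
  have hgD : ∀ x ∈ Set.Ioo a b, HasDerivAt (fun y => Real.exp (w * (ρ y + ε * t)))
      (Real.exp (w * (ρ x + ε * t)) * (w * (1 / f x))) x := by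
    intro x hx
    exact (((hρ x hx).add_const (ε*t)).const_mul w).exp
  have hlin : ∀ x : ℝ, HasDerivAt (fun y : ℝ => μ * y + 6 * M) μ x := by
    intro x
    simpa using ((hasDerivAt_id x).const_mul μ).add_const (6*M)
  -- derivative of the inner radial function
  have hinner : ∀ x ∈ Set.Ioo a b,
      HasDerivAt (fun y => y * Real.exp (w * (ρ y + ε * t)) / (μ * y + 6 * M))
        (((1 * Real.exp (w * (ρ x + ε * t))
            + x * (Real.exp (w * (ρ x + ε * t)) * (w * (1 / f x)))) * (μ * x + 6 * M)
          - x * Real.exp (w * (ρ x + ε * t)) * μ) / (μ * x + 6 * M) ^ 2) x := by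
    intro x hx
    exact ((hasDerivAt_id x).mul (hgD x hx)).div (hlin x) (hdpos x hx).ne'
  -- the function f·(∂_r φ) coincides near r with an explicit formula
  have hEq : (fun y => f y * deriv (fun z => z * Real.exp (w * (ρ z + ε * t)) / (μ * z + 6 * M)) y)
      =ᶠ[nhds r] fun y => (6*M*f y + w*(y*(μ*y+6*M))) * Real.exp (w * (ρ y + ε * t)) / (μ*y+6*M)^2 := by
    filter_upwards [isOpen_Ioo.mem_nhds hr] with x hx
    rw [(hinner x hx).deriv]
    have h1 : f x ≠ 0 := (hfpos x hx).ne'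
    have h2 : μ * x + 6 * M ≠ 0 := (hdpos x hx).ne'
    field_simp
    ring
  -- derivative of the explicit formula at r
  have hP : HasDerivAt (fun y => 6*M*f y + w*(y*(μ*y+6*M)))
      (6*M*(2*M/r^2 - 2*Λ*r/3) + w*(1*(μ*r+6*M) + r*μ)) r :=
    ((hfD r hr0.ne').const_mul (6*M)).add (((hasDerivAt_id r).mul (hlin r)).const_mul w)
  have hDen : HasDerivAt (fun y : ℝ => (μ*y+6*M)^2) (↑(2:ℕ) * (μ*r+6*M)^(2-1) * μ) r :=
    (hlin r).pow 2
  have hd2ne : (μ*r+6*M)^2 ≠ 0 := pow_ne_zero 2 hdr.ne'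
  have hE := (hP.mul (hgD r hr)).div hDen hd2ne
  -- time derivatives
  have htime : ∀ s : ℝ, HasDerivAt (fun t' => r * Real.exp (w * (ρ r + ε * t')) / (μ * r + 6 * M))
      (r * (Real.exp (w * (ρ r + ε * s)) * (w * ε)) / (μ * r + 6 * M)) s := by
    intro s
    have h1 : HasDerivAt (fun t' : ℝ => ρ r + ε * t') ε s := by
      simpa using ((hasDerivAt_id s).const_mul ε).const_add (ρ r)
    exact (((h1.const_mul w).exp).const_mul r).div_const (μ*r+6*M)
  have hT1 : (deriv fun t' => r * Real.exp (w * (ρ r + ε * t')) / (μ * r + 6 * M))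
      = fun s => r * (Real.exp (w * (ρ r + ε * s)) * (w * ε)) / (μ * r + 6 * M) :=
    funext fun s => (htime s).deriv
  have hT2 : HasDerivAt (fun s => r * (Real.exp (w * (ρ r + ε * s)) * (w * ε)) / (μ * r + 6 * M))
      (r * (Real.exp (w * (ρ r + ε * t)) * (w * ε) * (w * ε)) / (μ * r + 6 * M)) t := by
    have h1 : HasDerivAt (fun t' : ℝ => ρ r + ε * t') ε t := by
      simpa using ((hasDerivAt_id t).const_mul ε).const_add (ρ r)
    exact ((((h1.const_mul w).exp).mul_const (w*ε)).const_mul r).div_const (μ*r+6*M)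
  -- assemble
  simp only [waveOp]
  rw [hT1, hT2.deriv, hEq.deriv_eq, (show HasDerivAt (fun y => (6*M*f y + w*(y*(μ*y+6*M))) * Real.exp (w * (ρ y + ε * t)) / (μ*y+6*M)^2) _ r from hE).deriv]
  simp only [Pi.mul_apply]
  have hfne : f r ≠ 0 := hfr.ne'
  have hdne : μ * r + 6 * M ≠ 0 := hdr.ne'
  rw [hfdef] at hfne
  rw [hμdef] at hdne
  rw [hVdef]
  generalize Real.exp (w * (ρ r + ε * t)) = ex
  simp only [hfdef, hμdef, hwdef]
  have hε2 : ε * ε = 1 := by rcases hε with rfl | rfl <;> norm_num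
  exact zerilli_key M Λ (ℓ:ℝ) r ex ε hM hr0.ne' hfne hdne hε2
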